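/- The cokernel of K over ℤ, i.e., the quotient group ℤ¹⁰ / (ℤ-span of the columns of K), is isomorphic as an abelian group to (ℤ/3ℤ)⁴ ⊕ (ℤ/2ℤ). In particular it has exactly 162 elements. -/
import Mathlib


open Matrix

/-- The 5×5 integer matrix `D` with `D j k = 1` if `j = k`, `-1` if `j - k ≡ ±1 (mod 5)`,
and `0` otherwise. -/
def Dmat : Matrix (Fin 5) (Fin 5) ℤ := fun j k =>
  if j = k then 1
  else if (j : ZMod 5) - (k : ZMod 5) = 1 ∨ (j : ZMod 5) - (k : ZMod 5) = -1 then -1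
  else 0

/-- The 10×10 symmetric integer block matrix `K = [[I₅, D], [D, -I₅]]`, with row and
column index set `Fin 5 ⊕ Fin 5` (so that `ℤ¹⁰` is `Fin 5 ⊕ Fin 5 → ℤ`). -/
def Kmat : Matrix (Fin 5 ⊕ Fin 5) (Fin 5 ⊕ Fin 5) ℤ :=
  Matrix.fromBlocks 1 Dmat Dmat (-1)

def Pm : Matrix (Fin 5 ⊕ Fin 5) (Fin 5 ⊕ Fin 5) ℤ :=
  Matrix.fromBlocks 1 0
    !![1, -1, 0, 0, -1; 1, -1, -1, 0, -2; 2, -1, 1, 1, 0; -2, 1, -2, -2, -1; -1, 1, -1, -1, -1]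
    !![-1, 0, 0, 0, 0; -2, -1, 0, 0, 0; 0, 2, 1, 0, 0; -2, -4, -1, 1, 0; -1, -3, -1, 1, 1]

def Pim : Matrix (Fin 5 ⊕ Fin 5) (Fin 5 ⊕ Fin 5) ℤ :=
  Matrix.fromBlocks 1 0
    !![1, -1, 0, 0, -1; -1, 1, -1, 0, 0; 0, -1, 1, -1, 0; 0, 0, -1, 1, -1; -1, 0, 0, -1, 1]
    !![-1, 0, 0, 0, 0; 2, -1, 0, 0, 0; -4, 2, 1, 0, 0; 2, -2, 1, 1, 0; -1, 1, 0, -1, 1]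

def Qm : Matrix (Fin 5 ⊕ Fin 5) (Fin 5 ⊕ Fin 5) ℤ :=
  Matrix.fromBlocks 1
    !![0, 0, -1, 0, -1; 1, -1, -1, 0, -1; -1, 2, 0, 0, -1; 1, -2, 0, 1, -1; 0, 1, -1, -1, 1]
    0
    !![0, 0, 1, 1, -1; 0, 0, 0, 0, 1; 1, -1, -2, -1, 1; 0, 1, -2, -1, -1; 0, 0, 0, 1, -3]

def Sm : Matrix (Fin 5 ⊕ Fin 5) (Fin 5 ⊕ Fin 5) ℤ :=
  Matrix.fromBlocks 1 0 0
    !![1, 0, 0, 0, 0; 0, 3, 0, 0, 0; 0, 0, 3, 0, 0; 0, 0, 0, 3, 0; 0, 0, 0, 0, 6]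

/-- The linear map realizing the cokernel of `K`. -/
def gmap : ((Fin 5 ⊕ Fin 5) → ℤ) →ₗ[ℤ] ((Fin 4 → ZMod 3) × ZMod 2) :=
  LinearMap.prod
    (LinearMap.pi fun i : Fin 4 =>
      (Int.castAddHom (ZMod 3)).toIntLinearMap ∘ₗ
        (LinearMap.proj (Sum.inr i.succ) ∘ₗ Pm.mulVecLin))
    ((Int.castAddHom (ZMod 2)).toIntLinearMap ∘ₗ
      (LinearMap.proj (Sum.inr 4) ∘ₗ Pm.mulVecLin))

lemma gmap_apply (x : (Fin 5 ⊕ Fin 5) → ℤ) :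
    gmap x = (fun i : Fin 4 => ((Pm.mulVec x (Sum.inr i.succ) : ℤ) : ZMod 3),
      ((Pm.mulVec x (Sum.inr 4) : ℤ) : ZMod 2)) := rfl

lemma hPiP : Pim * Pm = 1 := by decide

lemma hPPi : Pm * Pim = 1 := by decide

lemma hKQ : Kmat * Qm = Pim * Sm := by decide

lemma hPK3 : ∀ i : Fin 4, ∀ j, (((Pm * Kmat) (Sum.inr i.succ) j : ℤ) : ZMod 3) = 0 := by decide

lemma hPK2 : ∀ j, (((Pm * Kmat) (Sum.inr 4) j : ℤ) : ZMod 2) = 0 := by decide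

lemma cast_mulVec_zero {n : ℕ} (M : Matrix (Fin 5 ⊕ Fin 5) (Fin 5 ⊕ Fin 5) ℤ)
    (r : Fin 5 ⊕ Fin 5) (h : ∀ j, ((M r j : ℤ) : ZMod n) = 0) (x : (Fin 5 ⊕ Fin 5) → ℤ) :
    ((M.mulVec x r : ℤ) : ZMod n) = 0 := by
  simp only [Matrix.mulVec, dotProduct]
  push_cast
  simp [h]

lemma hker : LinearMap.range Kmat.mulVecLin = LinearMap.ker gmap := by
  apply le_antisymm
  · rintro _ ⟨y, rfl⟩
    rw [LinearMap.mem_ker, Matrix.mulVecLin_apply, gmap_apply]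
    have h1 : ∀ i : Fin 4, ((Pm.mulVec (Kmat.mulVec y) (Sum.inr i.succ) : ℤ) : ZMod 3) = 0 := by
      intro i
      rw [Matrix.mulVec_mulVec]
      exact cast_mulVec_zero _ _ (hPK3 i) y
    have h2 : ((Pm.mulVec (Kmat.mulVec y) (Sum.inr 4) : ℤ) : ZMod 2) = 0 := by
      rw [Matrix.mulVec_mulVec]
      exact cast_mulVec_zero _ _ hPK2 y
    exact Prod.ext (funext h1) h2
  · intro x hx
    rw [LinearMap.mem_ker, gmap_apply, Prod.ext_iff] at hx
    set z := Pm.mulVec x with hz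
    have h3 : ∀ i : Fin 4, ((z (Sum.inr i.succ) : ℤ) : ZMod 3) = 0 :=
      fun i => congrFun hx.1 i
    have h2 : ((z (Sum.inr 4) : ℤ) : ZMod 2) = 0 := hx.2
    have d1 : (3 : ℤ) ∣ z (Sum.inr 1) := by
      exact_mod_cast (ZMod.intCast_zmod_eq_zero_iff_dvd _ 3).mp (h3 0)
    have d2 : (3 : ℤ) ∣ z (Sum.inr 2) := by
      exact_mod_cast (ZMod.intCast_zmod_eq_zero_iff_dvd _ 3).mp (h3 1)
    have d3 : (3 : ℤ) ∣ z (Sum.inr 3) := by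
      exact_mod_cast (ZMod.intCast_zmod_eq_zero_iff_dvd _ 3).mp (h3 2)
    have d4a : (3 : ℤ) ∣ z (Sum.inr 4) := by
      exact_mod_cast (ZMod.intCast_zmod_eq_zero_iff_dvd _ 3).mp (h3 3)
    have d4b : (2 : ℤ) ∣ z (Sum.inr 4) := by
      exact_mod_cast (ZMod.intCast_zmod_eq_zero_iff_dvd _ 2).mp h2
    have d4 : (6 : ℤ) ∣ z (Sum.inr 4) := by omega
    obtain ⟨a1, ha1⟩ := d1
    obtain ⟨a2, ha2⟩ := d2
    obtain ⟨a3, ha3⟩ := d3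
    obtain ⟨a4, ha4⟩ := d4
    set w : (Fin 5 ⊕ Fin 5) → ℤ :=
      Sum.elim (fun j => z (Sum.inl j))
        ![z (Sum.inr 0), a1, a2, a3, a4] with hw
    refine ⟨Qm.mulVec w, ?_⟩
    have hS : Sm.mulVec w = Pm.mulVec x := by
      rw [← hz]
      funext i
      rcases i with j | j <;> fin_cases j <;>
        simp [Sm, hw, Matrix.mulVec, dotProduct, Fintype.sum_sum_type,
          Fin.sum_univ_five, Matrix.fromBlocks, ha1, ha2, ha3, ha4]
    rw [Matrix.mulVecLin_apply, Matrix.mulVec_mulVec, hKQ, ← Matrix.mulVec_mulVec, hS,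
      Matrix.mulVec_mulVec, hPiP, Matrix.one_mulVec]

lemma val3 : ∀ a : ZMod 3, (((a.val : ℤ)) : ZMod 3) = a := by decide
lemma val34 : ∀ (a : ZMod 3) (b : ZMod 2), (((a.val * 4 + b.val * 3 : ℤ)) : ZMod 3) = a := by
  decide
lemma val2 : ∀ (a : ZMod 3) (b : ZMod 2), (((a.val * 4 + b.val * 3 : ℤ)) : ZMod 2) = b := by
  decide

lemma hsurj : Function.Surjective gmap := by
  rintro ⟨c, d⟩
  set y : (Fin 5 ⊕ Fin 5) → ℤ :=
    Sum.elim 0 ![0, ((c 0).val : ℤ), ((c 1).val : ℤ), ((c 2).val : ℤ),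
      ((c 3).val : ℤ) * 4 + (d.val : ℤ) * 3] with hy
  refine ⟨Pim.mulVec y, ?_⟩
  have hPy : Pm.mulVec (Pim.mulVec y) = y := by
    rw [Matrix.mulVec_mulVec, hPPi, Matrix.one_mulVec]
  rw [gmap_apply, hPy]
  refine Prod.ext (funext fun i => ?_) ?_
  · fin_cases i <;>
      simp [hy, val3, show (4 : ZMod 3) = 1 by decide, show (3 : ZMod 3) = 0 by decide]
  · simp [hy, show (4 : ZMod 2) = 0 by decide, show (3 : ZMod 2) = 1 by decide,
      ZMod.natCast_val, ZMod.cast_id]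

theorem stmt_1 :
    Nonempty ((((Fin 5 ⊕ Fin 5) → ℤ) ⧸ LinearMap.range Kmat.mulVecLin) ≃+
      ((Fin 4 → ZMod 3) × ZMod 2)) ∧
    Nat.card (((Fin 5 ⊕ Fin 5) → ℤ) ⧸ LinearMap.range Kmat.mulVecLin) = 162 := by
  have e : (((Fin 5 ⊕ Fin 5) → ℤ) ⧸ LinearMap.range Kmat.mulVecLin) ≃ₗ[ℤ]
      ((Fin 4 → ZMod 3) × ZMod 2) :=
    (Submodule.quotEquivOfEq _ _ hker).trans (gmap.quotKerEquivOfSurjective hsurj)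
  refine ⟨⟨e.toAddEquiv⟩, ?_⟩
  rw [Nat.card_congr e.toEquiv, Nat.card_prod, Nat.card_fun]
  simp [Nat.card_eq_fintype_card]
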